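/- Define M(n) as the smallest positive integer such that |C(X)| ≤ M(n) for every ultrametric space (X,d) with |X| = n. Then M is monotone: M(n₁) ≤ M(n₂) whenever n₁ ≤ n₂ are positive integers. -/

import Mathlib

open Classical

/-- The center of distances of a metric space. -/
def centerOfDistances (X : Type*) [MetricSpace X] : Set ℝ :=
  {t : ℝ | ∀ p : X, ∃ x : X, dist p x = t}

/-- `m` is a positive integer bounding `|C(X)|` for every ultrametric space with `n` points. -/
def IsCenterBound (n m : ℕ) : Prop :=
  0 < m ∧ ∀ (X : Type) (_ : MetricSpace X) (_ : Fintype X),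
    IsUltrametricDist X → Fintype.card X = n → (centerOfDistances X).ncard ≤ m

section Ext

variable {X : Type} [MetricSpace X]

/-- Extension distance on `X ⊕ Fin k`: new points behave like `x₀` but at distance `ε`. -/
noncomputable def extDist (x₀ : X) (ε : ℝ) (k : ℕ) : (X ⊕ Fin k) → (X ⊕ Fin k) → ℝ :=
  fun y z => if y = z then 0 else
    max (dist (Sum.elim id (fun _ => x₀) y) (Sum.elim id (fun _ => x₀) z)) ε

variable (x₀ : X) (ε : ℝ) (k : ℕ)

theorem extDist_nonneg (hε0 : 0 < ε) (y z : X ⊕ Fin k) : 0 ≤ extDist x₀ ε k y z := by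
  unfold extDist
  split
  · exact le_refl 0
  · exact le_trans hε0.le (le_max_right _ _)

theorem extDist_comm (y z : X ⊕ Fin k) : extDist x₀ ε k y z = extDist x₀ ε k z y := by
  unfold extDist
  rcases eq_or_ne y z with h | h
  · simp [h]
  · rw [if_neg h, if_neg (Ne.symm h), dist_comm]

theorem extDist_strong (hε0 : 0 < ε) (hu : IsUltrametricDist X) (y w z : X ⊕ Fin k) :
    extDist x₀ ε k y z ≤ max (extDist x₀ ε k y w) (extDist x₀ ε k w z) := by
  rcases eq_or_ne y z with h | h
  · rw [h]
    conv_lhs => unfold extDist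
    rw [if_pos rfl]
    exact le_max_of_le_left (extDist_nonneg x₀ ε k hε0 z w)
  rcases eq_or_ne w y with hwy | hwy
  · rw [hwy]
    exact le_max_of_le_right (le_refl _)
  rcases eq_or_ne w z with hwz | hwz
  · rw [hwz]
    exact le_max_of_le_left (le_refl _)
  · unfold extDist
    rw [if_neg h, if_neg (Ne.symm hwy), if_neg hwz]
    have h1 := hu.dist_triangle_max (Sum.elim id (fun _ => x₀) y)
      (Sum.elim id (fun _ => x₀) w) (Sum.elim id (fun _ => x₀) z)
    rw [max_max_max_comm]
    exact max_le_max h1 (le_max_left ε ε)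

/-- The extended metric space. -/
noncomputable def extMetric (hε0 : 0 < ε) (hu : IsUltrametricDist X) :
    MetricSpace (X ⊕ Fin k) where
  dist := extDist x₀ ε k
  dist_self y := by show extDist x₀ ε k y y = 0; unfold extDist; rw [if_pos rfl]
  dist_comm := extDist_comm x₀ ε k
  dist_triangle y w z := by
    refine le_trans (extDist_strong x₀ ε k hε0 hu y w z) ?_
    exact max_le (le_add_of_nonneg_right (extDist_nonneg x₀ ε k hε0 _ _))
      (le_add_of_nonneg_left (extDist_nonneg x₀ ε k hε0 _ _))
  eq_of_dist_eq_zero := by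
    intro y z hyz
    by_contra h
    have h2 : extDist x₀ ε k y z = max (dist (Sum.elim id (fun _ => x₀) y)
        (Sum.elim id (fun _ => x₀) z)) ε := if_neg h
    have h3 : (0:ℝ) < extDist x₀ ε k y z := by
      rw [h2]; exact lt_of_lt_of_le hε0 (le_max_right _ _)
    have hyz' : extDist x₀ ε k y z = 0 := hyz
    rw [hyz'] at h3
    exact lt_irrefl 0 h3

theorem key {X : Type} [MetricSpace X] [Fintype X] (hu : IsUltrametricDist X)
    (x₀ : X) (ε : ℝ) (hε0 : 0 < ε) (hεle : ∀ a b : X, a ≠ b → ε ≤ dist a b)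
    (k m : ℕ) (hb : IsCenterBound (Fintype.card X + k) m) :
    (centerOfDistances X).ncard ≤ m := by
  letI mY : MetricSpace (X ⊕ Fin k) := extMetric x₀ ε k hε0 hu
  have huY : IsUltrametricDist (X ⊕ Fin k) := ⟨fun y w z => extDist_strong x₀ ε k hε0 hu y w z⟩
  have hcard : Fintype.card (X ⊕ Fin k) = Fintype.card X + k := by rw [Fintype.card_sum, Fintype.card_fin]
  have hbY := hb.2 (X ⊕ Fin k) mY inferInstance huY hcard
  have hsub : centerOfDistances X ⊆ centerOfDistances (X ⊕ Fin k) := by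
    intro t ht p
    rcases p with p | j
    · obtain ⟨x, hx⟩ := ht p
      rcases eq_or_ne p x with rfl | hpx
      · refine ⟨Sum.inl p, ?_⟩
        have : dist (Sum.inl p : X ⊕ Fin k) (Sum.inl p) = 0 := dist_self _
        rw [this, ← hx, dist_self]
      · refine ⟨Sum.inl x, ?_⟩
        show extDist x₀ ε k (Sum.inl p) (Sum.inl x) = t
        unfold extDist
        rw [if_neg (fun h => hpx (Sum.inl.inj h))]
        simp only [Sum.elim_inl, id]
        rw [hx]
        exact max_eq_left (hx ▸ hεle p x hpx)
    · obtain ⟨x, hx⟩ := ht x₀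
      rcases eq_or_ne x₀ x with rfl | hpx
      · refine ⟨Sum.inr j, ?_⟩
        have : dist (Sum.inr j : X ⊕ Fin k) (Sum.inr j) = 0 := dist_self _
        rw [this, ← hx, dist_self]
      · refine ⟨Sum.inl x, ?_⟩
        show extDist x₀ ε k (Sum.inr j) (Sum.inl x) = t
        unfold extDist
        rw [if_neg (fun h => by cases h)]
        simp only [Sum.elim_inl, Sum.elim_inr, id]
        rw [hx]
        exact max_eq_left (hx ▸ hεle x₀ x hpx)
  have hfin : (centerOfDistances (X ⊕ Fin k)).Finite := by
    have hsub2 : centerOfDistances (X ⊕ Fin k) ⊆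
        Set.range (fun y : X ⊕ Fin k => dist (Sum.inl x₀ : X ⊕ Fin k) y) := by
      intro t ht
      obtain ⟨x, hx⟩ := ht (Sum.inl x₀)
      exact ⟨x, hx⟩
    exact Set.Finite.subset (Set.finite_range _) hsub2
  exact le_trans (Set.ncard_le_ncard hsub hfin) hbY

end Ext

/-- The function `M`, assigning to `n` the least positive integer bounding the size of
the center of distances of all `n`-point ultrametric spaces, is monotone. -/
theorem M_monotone (n₁ n₂ m₁ m₂ : ℕ) (hn₁ : 1 ≤ n₁) (hn : n₁ ≤ n₂)
    (hm₁ : IsLeast {m : ℕ | IsCenterBound n₁ m} m₁)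
    (hm₂ : IsLeast {m : ℕ | IsCenterBound n₂ m} m₂) :
    m₁ ≤ m₂ := by
  apply hm₁.2
  refine ⟨hm₂.1.1, ?_⟩
  intro X mX fX hu hcard
  letI := mX; letI := fX
  have hne : Nonempty X := by
    rw [← Fintype.card_pos_iff, hcard]; omega
  obtain ⟨x₀⟩ := hne
  have hb : IsCenterBound (Fintype.card X + (n₂ - n₁)) m₂ := by
    rw [hcard]
    have : n₁ + (n₂ - n₁) = n₂ := by omega
    rw [this]
    exact hm₂.1
  set s : Finset ℝ :=
    (Finset.univ.filter fun p : X × X => p.1 ≠ p.2).image fun p => dist p.1 p.2 with hsdef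
  by_cases hs : s.Nonempty
  · set ε := s.min' hs with hεdef
    have hεmem : ε ∈ s := s.min'_mem hs
    rw [hsdef, Finset.mem_image] at hεmem
    obtain ⟨p, hp, hpd⟩ := hεmem
    rw [Finset.mem_filter] at hp
    have hε0 : 0 < ε := by rw [← hpd]; exact dist_pos.mpr hp.2
    have hεle : ∀ a b : X, a ≠ b → ε ≤ dist a b := by
      intro a b hab
      exact s.min'_le _ (Finset.mem_image.mpr ⟨(a, b),
        Finset.mem_filter.mpr ⟨Finset.mem_univ _, hab⟩, rfl⟩)
    exact key hu x₀ ε hε0 hεle (n₂ - n₁) m₂ hb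
  · have hεle : ∀ a b : X, a ≠ b → (1:ℝ) ≤ dist a b := by
      intro a b hab
      exact absurd ⟨dist a b, Finset.mem_image.mpr ⟨(a, b),
        Finset.mem_filter.mpr ⟨Finset.mem_univ _, hab⟩, rfl⟩⟩ hs
    exact key hu x₀ 1 one_pos hεle (n₂ - n₁) m₂ hb
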